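/- Let (X, Y) be a Fredholm pair in a Banach space Z, i.e. X, Y are closed subspaces, X ∩ Y is finite dimensional, X + Y is closed, and Z/(X+Y) is finite dimensional. Suppose W ⊆ Z is a subspace that is itself a Banach space under a norm ‖·‖_W with ‖w‖_Z ≤ C‖w‖_W for all w ∈ W, and suppose Y ⊆ W. Then (X ∩ W, Y) is a Fredholm pair in W. -/
import Mathlib


/-- Lemma A.6: let `(X, Y)` be a Fredholm pair in the Banach space `Z` and let `W` be a
Banach space continuously embedded in `Z` (embedding `j`) with `Y ⊆ W`.  Then
`(X ∩ W, Y)` is a Fredholm pair in `W` (subspaces of `W` are realised as preimages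
under `j`). -/
theorem stmt_5 {𝕜 Z W : Type*} [RCLike 𝕜]
    [NormedAddCommGroup Z] [NormedSpace 𝕜 Z] [CompleteSpace Z]
    [NormedAddCommGroup W] [NormedSpace 𝕜 W] [CompleteSpace W]
    (X Y : Submodule 𝕜 Z)
    (hXcl : IsClosed (X : Set Z)) (hYcl : IsClosed (Y : Set Z))
    (hfin : FiniteDimensional 𝕜 ↥(X ⊓ Y))
    (hsumcl : IsClosed ((X ⊔ Y : Submodule 𝕜 Z) : Set Z))
    (hcofin : FiniteDimensional 𝕜 (Z ⧸ (X ⊔ Y)))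
    (j : W →ₗ[𝕜] Z) (hj : Function.Injective j)
    (C : ℝ) (hbd : ∀ w : W, ‖j w‖ ≤ C * ‖w‖)
    (hYW : Y ≤ LinearMap.range j) :
    IsClosed ((X.comap j : Submodule 𝕜 W) : Set W) ∧
    IsClosed ((Y.comap j : Submodule 𝕜 W) : Set W) ∧
    FiniteDimensional 𝕜 ↥(X.comap j ⊓ Y.comap j) ∧
    IsClosed ((X.comap j ⊔ Y.comap j : Submodule 𝕜 W) : Set W) ∧
    FiniteDimensional 𝕜 (W ⧸ (X.comap j ⊔ Y.comap j)) := by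
  have hjc : Continuous j := (j.mkContinuous C hbd).continuous
  have hsup : X.comap j ⊔ Y.comap j = (X ⊔ Y).comap j := by
    refine le_antisymm (sup_le (Submodule.comap_mono le_sup_left)
      (Submodule.comap_mono le_sup_right)) ?_
    intro w hw
    obtain ⟨x, hx, y, hy, hxy⟩ := Submodule.mem_sup.mp hw
    obtain ⟨v, hv⟩ := hYW hy
    refine Submodule.mem_sup.mpr ⟨w - v, ?_, v, show j v ∈ Y by rw [hv]; exact hy, by abel⟩
    have : j (w - v) = x := by rw [map_sub, hv, ← hxy]; abel
    simpa [Submodule.mem_comap, this] using hx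
  refine ⟨hXcl.preimage hjc, hYcl.preimage hjc, ?_, ?_, ?_⟩
  · have : X.comap j ⊓ Y.comap j = (X ⊓ Y).comap j := (Submodule.comap_inf ..).symm
    rw [this]
    have hinj : Function.Injective (j.restrict (fun x (hx : x ∈ (X ⊓ Y).comap j) => Submodule.mem_comap.mp hx)) := by
      intro a b h
      ext
      exact hj (congrArg Subtype.val h)
    exact FiniteDimensional.of_injective _ hinj
  · rw [hsup]; exact hsumcl.preimage hjc
  · have hker : LinearMap.ker ((X ⊔ Y).mkQ.comp j) = X.comap j ⊔ Y.comap j := by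
      rw [LinearMap.ker_comp, Submodule.ker_mkQ, hsup]
    have hinj : Function.Injective
        ((X.comap j ⊔ Y.comap j).liftQ ((X ⊔ Y).mkQ.comp j) hker.ge) := by
      rw [← LinearMap.ker_eq_bot, Submodule.ker_liftQ, hker]
      exact le_bot_iff.mp (Submodule.map_le_iff_le_comap.mpr (by rw [Submodule.comap_bot, Submodule.ker_mkQ]))
    exact FiniteDimensional.of_injective _ hinj
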